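/- Let v₁ and v₂ be unit vectors in ℝⁿ with 1 − (v₁ᵀ v₂)² ≤ c·λ where λ ∈ (0,1] and c ≥ 1, and let M₁ = I − (1−λ)v₁v₁ᵀ, M₂ = I − (1−λ)v₂v₂ᵀ. Then every eigenvalue γ of M₁^{−1/2}(M₂ − M₁)M₁^{−1/2} satisfies |γ| ≤ c(1−λ)² + √c·(1−λ), and in particular |γ| ≤ 2c. -/

import Mathlib

open Matrix

private lemma dot_cs {n : ℕ} (f g : Fin n → ℝ) :
    (f ⬝ᵥ g) ^ 2 ≤ (f ⬝ᵥ f) * (g ⬝ᵥ g) := by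
  have h := Finset.sum_mul_sq_le_sq_mul_sq Finset.univ f g
  simpa [dotProduct, sq] using h

private lemma dot_self_nonneg {n : ℕ} (f : Fin n → ℝ) : 0 ≤ f ⬝ᵥ f :=
  Finset.sum_nonneg fun i _ => mul_self_nonneg (f i)

private lemma dot_sandwich {n : ℕ} (S A : Matrix (Fin n) (Fin n) ℝ) (hS : S.PosSemidef)
    (x : Fin n → ℝ) :
    x ⬝ᵥ (S * A * S).mulVec x = (S.mulVec x) ⬝ᵥ A.mulVec (S.mulVec x) := by
  have hsym : Sᵀ = S := by
    have := hS.1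
    simpa [Matrix.IsHermitian, Matrix.conjTranspose_eq_transpose_of_trivial] using this
  rw [← mulVec_mulVec, ← mulVec_mulVec, dotProduct_mulVec, ← hsym, vecMul_transpose, hsym]

private lemma dot_vecMulVec {n : ℕ} (v w y : Fin n → ℝ) :
    y ⬝ᵥ (vecMulVec v w).mulVec y = (y ⬝ᵥ v) * (w ⬝ᵥ y) := by
  simp only [vecMulVec, mulVec, dotProduct, Matrix.of_apply, Finset.mul_sum, Finset.sum_mul]
  rw [Finset.sum_comm]
  congr 1; ext i; congr 1; ext j; ring


private lemma scalar_bound (lam c q a b t N γ : ℝ)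
    (hlam0 : 0 < lam) (hlam1 : lam ≤ 1) (hc : 1 ≤ c) (hsc : q ^ 2 = c) (hsc1 : 1 ≤ q)
    (hclose : 1 - t ^ 2 ≤ c * lam) (ht2 : t ^ 2 ≤ 1) (ha2 : a ^ 2 ≤ N)
    (hr2 : (b - t * a) ^ 2 ≤ (1 - t ^ 2) * (N - a ^ 2))
    (hDpos : 0 < N - (1 - lam) * a ^ 2)
    (hEig : γ * (N - (1 - lam) * a ^ 2) = (1 - lam) * (a ^ 2 - b ^ 2)) :
    |γ| ≤ c * (1 - lam) ^ 2 + q * (1 - lam) := by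
  have hc0 : (0:ℝ) ≤ c := by linarith
  rcases eq_or_lt_of_le hlam1 with heq | hlt
  · -- lam = 1
    have hγ : γ = 0 := by
      rcases mul_eq_zero.mp (by rw [hEig, heq]; ring :
          γ * (N - (1 - lam) * a ^ 2) = 0) with h | h
      · exact h
      · exact absurd h (ne_of_gt hDpos)
    rw [hγ, abs_zero, heq]
    norm_num
  · -- lam < 1
    obtain ⟨e, he⟩ : ∃ e : ℝ, e = 1 - lam := ⟨_, rfl⟩
    obtain ⟨K, hKe⟩ : ∃ K : ℝ, K = c * e ^ 2 + q * e := ⟨_, rfl⟩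
    obtain ⟨r, hr⟩ : ∃ r : ℝ, r = b - t * a := ⟨_, rfl⟩
    obtain ⟨W, hW⟩ : ∃ W : ℝ, W = N - a ^ 2 := ⟨_, rfl⟩
    have he0 : 0 < e := by rw [he]; linarith
    have hW0 : 0 ≤ W := by rw [hW]; linarith
    have hs20 : 0 ≤ 1 - t ^ 2 := by linarith
    have hq0 : 0 < q := by linarith
    have hK0 : 0 < K := by
      rw [hKe]
      have h1 : 0 < q * e := mul_pos hq0 he0
      have h2 : 0 ≤ c * e ^ 2 := mul_nonneg hc0 (sq_nonneg e)
      linarith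
    have hrW : r ^ 2 ≤ (1 - t ^ 2) * W := by rw [hr, hW]; exact hr2
    have hD1 : N - (1 - lam) * a ^ 2 = lam * a ^ 2 + W := by rw [hW]; ring
    have hDpos' : 0 < lam * a ^ 2 + W := hD1 ▸ hDpos
    have hEig' : γ * (lam * a ^ 2 + W) =
        e * ((1 - t ^ 2) * a ^ 2 - 2 * t * a * r - r ^ 2) := by
      rw [← hD1, hEig, he, hr]; ring
    have hgoal : c * (1 - lam) ^ 2 + q * (1 - lam) = K := by rw [hKe, he]
    rw [hgoal, abs_le]
    rcases hs20.eq_or_lt with hs2z | hs2p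
    · -- 1 - t² = 0 forces r = 0 and the quadratic form vanishes
      have hr0 : r = 0 := by
        have hz : (1 - t ^ 2) * W = 0 := by rw [← hs2z]; ring
        have h1 : r ^ 2 ≤ 0 := by linarith [hrW]
        have h2 : r ^ 2 = 0 := le_antisymm h1 (sq_nonneg r)
        exact sq_eq_zero_iff.mp h2
      have hγ : γ = 0 := by
        rcases mul_eq_zero.mp (by rw [hEig', hr0, ← hs2z]; ring :
            γ * (lam * a ^ 2 + W) = 0) with h | h
        · exact h
        · exact absurd h (ne_of_gt hDpos')
      rw [hγ]
      constructor <;> linarith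
    · -- 1 - t² > 0
      have hK1 : (0:ℝ) < K + 1 := by linarith
      have hKsq : K ^ 2 - c * e ^ 2 * (K + 1) = c * q * e ^ 3 := by
        rw [hKe]; linear_combination e ^ 2 * hsc
      have hdet1 : 0 ≤ K ^ 2 * lam - e ^ 2 * (1 - t ^ 2) * (K + 1) := by
        have h1 : e ^ 2 * (1 - t ^ 2) * (K + 1) ≤ e ^ 2 * (c * lam) * (K + 1) :=
          mul_le_mul_of_nonneg_right
            (mul_le_mul_of_nonneg_left hclose (sq_nonneg e)) hK1.le
        have h2 : 0 ≤ lam * (c * q * e ^ 3) := by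
          have : 0 ≤ c * q * e ^ 3 := by positivity
          exact mul_nonneg hlam0.le this
        have h4 : K ^ 2 * lam - c * e ^ 2 * (K + 1) * lam = lam * (c * q * e ^ 3) := by
          linear_combination lam * hKsq
        linarith [h1, h2, h4]
      have hdet2 : 0 ≤ K ^ 2 * lam + e ^ 2 * (1 - t ^ 2) * (K - 1) := by
        have hKge : q * e ≤ K := by
          have h2 : 0 ≤ c * e ^ 2 := mul_nonneg hc0 (sq_nonneg e)
          rw [hKe]; linarith
        have hKsq2 : K ^ 2 = c ^ 2 * e ^ 4 + 2 * c * q * e ^ 3 + c * e ^ 2 := by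
          rw [hKe]; linear_combination e ^ 2 * hsc
        have hK2 : c * e ^ 2 ≤ K ^ 2 := by
          have p1 : (0:ℝ) ≤ c ^ 2 * e ^ 4 := by positivity
          have p2 : (0:ℝ) ≤ 2 * c * q * e ^ 3 := by positivity
          linarith [hKsq2]
        have h3 : e ^ 2 * (1 - t ^ 2) ≤ e ^ 2 * (c * lam) :=
          mul_le_mul_of_nonneg_left hclose (sq_nonneg e)
        linarith [h3, mul_le_mul_of_nonneg_right hK2 hlam0.le,
          mul_nonneg (mul_nonneg (sq_nonneg e) hs2p.le) hK0.le]
      -- upper quadratic bound, multiplied by (1 - t²)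
      have hG : e * (1 - t ^ 2) * ((1 - t ^ 2) * a ^ 2 - 2 * t * a * r - r ^ 2) ≤
          K * lam * (1 - t ^ 2) * a ^ 2 + K * r ^ 2 := by
        have hpos : 0 < K + e * (1 - t ^ 2) := by positivity
        have hid : (K + e * (1 - t ^ 2)) *
            (K * lam * (1 - t ^ 2) * a ^ 2 + K * r ^ 2
              - e * (1 - t ^ 2) * ((1 - t ^ 2) * a ^ 2 - 2 * t * a * r - r ^ 2))
            = ((K + e * (1 - t ^ 2)) * r + e * (1 - t ^ 2) * t * a) ^ 2
              + (1 - t ^ 2) * (K ^ 2 * lam - e ^ 2 * (1 - t ^ 2) * (K + 1)) * a ^ 2 := by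
          rw [he]; ring
        have hrhs : 0 ≤ (K + e * (1 - t ^ 2)) *
            (K * lam * (1 - t ^ 2) * a ^ 2 + K * r ^ 2
              - e * (1 - t ^ 2) * ((1 - t ^ 2) * a ^ 2 - 2 * t * a * r - r ^ 2)) := by
          rw [hid]
          exact add_nonneg (sq_nonneg _)
            (mul_nonneg (mul_nonneg hs2p.le hdet1) (sq_nonneg a))
        have := (mul_nonneg_iff_of_pos_left hpos).mp hrhs
        linarith
      -- lower quadratic bound, multiplied by (1 - t²)
      have hH : -(K * lam * (1 - t ^ 2) * a ^ 2 + K * r ^ 2) ≤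
          e * (1 - t ^ 2) * ((1 - t ^ 2) * a ^ 2 - 2 * t * a * r - r ^ 2) := by
        have hpos : 0 < (1 - t ^ 2) * (K * lam + e * (1 - t ^ 2)) := by positivity
        have hid : ((1 - t ^ 2) * (K * lam + e * (1 - t ^ 2))) *
            (K * lam * (1 - t ^ 2) * a ^ 2 + K * r ^ 2
              + e * (1 - t ^ 2) * ((1 - t ^ 2) * a ^ 2 - 2 * t * a * r - r ^ 2))
            = ((1 - t ^ 2) * (K * lam + e * (1 - t ^ 2)) * a - e * (1 - t ^ 2) * t * r) ^ 2
              + (1 - t ^ 2) * (K ^ 2 * lam + e ^ 2 * (1 - t ^ 2) * (K - 1)) * r ^ 2 := by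
          rw [he]; ring
        have hrhs : 0 ≤ ((1 - t ^ 2) * (K * lam + e * (1 - t ^ 2))) *
            (K * lam * (1 - t ^ 2) * a ^ 2 + K * r ^ 2
              + e * (1 - t ^ 2) * ((1 - t ^ 2) * a ^ 2 - 2 * t * a * r - r ^ 2)) := by
          rw [hid]
          exact add_nonneg (sq_nonneg _)
            (mul_nonneg (mul_nonneg hs2p.le hdet2) (sq_nonneg r))
        have := (mul_nonneg_iff_of_pos_left hpos).mp hrhs
        linarith
      have hKr : K * r ^ 2 ≤ K * ((1 - t ^ 2) * W) := mul_le_mul_of_nonneg_left hrW hK0.le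
      have hup : γ * (lam * a ^ 2 + W) ≤ K * (lam * a ^ 2 + W) := by
        have hs : (1 - t ^ 2) * (γ * (lam * a ^ 2 + W)) ≤
            (1 - t ^ 2) * (K * (lam * a ^ 2 + W)) := by
          rw [hEig']; linarith [hG, hKr]
        exact le_of_mul_le_mul_left hs hs2p
      have hlo : -(K * (lam * a ^ 2 + W)) ≤ γ * (lam * a ^ 2 + W) := by
        have hs : (1 - t ^ 2) * (-(K * (lam * a ^ 2 + W))) ≤
            (1 - t ^ 2) * (γ * (lam * a ^ 2 + W)) := by
          rw [hEig']; linarith [hH, hKr]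
        exact le_of_mul_le_mul_left hs hs2p
      constructor
      · have := le_of_mul_le_mul_right
          (by linarith [hlo] : -K * (lam * a ^ 2 + W) ≤ γ * (lam * a ^ 2 + W)) hDpos'
        linarith
      · exact le_of_mul_le_mul_right (by linarith [hup]) hDpos'

set_option maxHeartbeats 1000000 in
/-- With `v₁, v₂` unit vectors, `1 - ⟨v₁,v₂⟩² ≤ c·λ`, `λ ∈ (0,1]`,
`c ≥ 1`, `Mᵢ = I - (1-λ)vᵢvᵢᵀ`, and `S = M₁^{-1/2}` (i.e. `S` positive semidefinite with
`S * M₁ * S = I`), every eigenvalue `γ` of `S * (M₂ - M₁) * S` satisfies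
`|γ| ≤ c(1-λ)² + √c·(1-λ) ≤ 2c`. -/
theorem stmt_4 {n : ℕ} (v₁ v₂ : Fin n → ℝ)
    (hv₁ : v₁ ⬝ᵥ v₁ = 1) (hv₂ : v₂ ⬝ᵥ v₂ = 1)
    (lam c : ℝ) (hlam0 : 0 < lam) (hlam1 : lam ≤ 1) (hc : 1 ≤ c)
    (hclose : 1 - (v₁ ⬝ᵥ v₂) ^ 2 ≤ c * lam)
    (M₁ M₂ S : Matrix (Fin n) (Fin n) ℝ)
    (hM₁ : M₁ = 1 - (1 - lam) • vecMulVec v₁ v₁)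
    (hM₂ : M₂ = 1 - (1 - lam) • vecMulVec v₂ v₂)
    (hS : S.PosSemidef) (hSsqrt : S * M₁ * S = 1)
    (γ : ℝ) (x : Fin n → ℝ) (hx : x ≠ 0)
    (heig : (S * (M₂ - M₁) * S).mulVec x = γ • x) :
    |γ| ≤ c * (1 - lam) ^ 2 + Real.sqrt c * (1 - lam) ∧ |γ| ≤ 2 * c := by
  have hc0 : (0:ℝ) ≤ c := by linarith
  set q : ℝ := Real.sqrt c with hq
  have hsc : q ^ 2 = c := Real.sq_sqrt hc0
  have hsc1 : 1 ≤ q := by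
    rw [hq, show (1:ℝ) = Real.sqrt 1 by simp]
    exact Real.sqrt_le_sqrt hc
  set y : Fin n → ℝ := S.mulVec x with hy
  set a : ℝ := v₁ ⬝ᵥ y with ha
  set b : ℝ := v₂ ⬝ᵥ y with hb
  set t : ℝ := v₁ ⬝ᵥ v₂ with ht
  set N : ℝ := y ⬝ᵥ y with hN
  -- x ⬝ᵥ x > 0
  have hxx : 0 < x ⬝ᵥ x := by
    rcases (dot_self_nonneg x).lt_or_eq with h | h
    · exact h
    · exact absurd ((dotProduct_self_eq_zero).mp h.symm) hx
  -- dot product facts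
  have c21 : v₂ ⬝ᵥ v₁ = t := dotProduct_comm v₂ v₁
  have cy1 : y ⬝ᵥ v₁ = a := dotProduct_comm y v₁
  have cy2 : y ⬝ᵥ v₂ = b := dotProduct_comm y v₂
  -- x ⬝ᵥ x = y ⬝ᵥ M₁ y
  have hD : x ⬝ᵥ x = N - (1 - lam) * a ^ 2 := by
    have h1 : x ⬝ᵥ x = y ⬝ᵥ M₁.mulVec y := by
      rw [← dot_sandwich S M₁ hS x, hSsqrt]
      simp
    rw [h1, hM₁]
    simp only [Matrix.sub_mulVec, dotProduct_sub, Matrix.smul_mulVec, dotProduct_smul]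
    rw [dot_vecMulVec, Matrix.one_mulVec, cy1, ← ha, ← hN, smul_eq_mul]
    ring
  -- eigen equation in scalar form
  have hEig : γ * (x ⬝ᵥ x) = (1 - lam) * (a ^ 2 - b ^ 2) := by
    have h1 : x ⬝ᵥ (S * (M₂ - M₁) * S).mulVec x = γ * (x ⬝ᵥ x) := by
      rw [heig, dotProduct_smul]; rfl
    have h2 : x ⬝ᵥ (S * (M₂ - M₁) * S).mulVec x = y ⬝ᵥ (M₂ - M₁).mulVec y :=
      dot_sandwich S (M₂ - M₁) hS x
    have h3 : M₂ - M₁ = (1 - lam) • vecMulVec v₁ v₁ - (1 - lam) • vecMulVec v₂ v₂ := by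
      rw [hM₁, hM₂]; abel
    rw [h2, h3] at h1
    simp only [Matrix.sub_mulVec, dotProduct_sub, Matrix.smul_mulVec,
      dotProduct_smul, smul_eq_mul] at h1
    rw [dot_vecMulVec, dot_vecMulVec, cy1, cy2, ← ha, ← hb] at h1
    rw [← h1]; ring
  -- Cauchy-Schwarz facts
  have ht2 : t ^ 2 ≤ 1 := by
    have := dot_cs v₁ v₂
    rwa [hv₁, hv₂, one_mul, ← ht] at this
  have ha2 : a ^ 2 ≤ N := by
    have := dot_cs v₁ y
    rwa [hv₁, one_mul, ← ha, ← hN] at this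
  have hr2 : (b - t * a) ^ 2 ≤ (1 - t ^ 2) * (N - a ^ 2) := by
    have h := dot_cs (v₂ - t • v₁) (y - a • v₁)
    have e1 : (v₂ - t • v₁) ⬝ᵥ (y - a • v₁) = b - t * a := by
      simp only [sub_dotProduct, dotProduct_sub, smul_dotProduct, dotProduct_smul,
        smul_eq_mul, hv₁, c21, cy1, ← ha, ← hb, ← ht]
      ring
    have e2 : (v₂ - t • v₁) ⬝ᵥ (v₂ - t • v₁) = 1 - t ^ 2 := by
      simp only [sub_dotProduct, dotProduct_sub, smul_dotProduct, dotProduct_smul,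
        smul_eq_mul, hv₁, hv₂, c21, ← ht]
      ring
    have e3 : (y - a • v₁) ⬝ᵥ (y - a • v₁) = N - a ^ 2 := by
      simp only [sub_dotProduct, dotProduct_sub, smul_dotProduct, dotProduct_smul,
        smul_eq_mul, hv₁, cy1, ← ha, ← hN]
      ring
    rwa [e1, e2, e3] at h
  -- now the scalar endgame
  clear_value q y a b t N
  have hDpos : 0 < N - (1 - lam) * a ^ 2 := hD ▸ hxx
  have hEig2 : γ * (N - (1 - lam) * a ^ 2) = (1 - lam) * (a ^ 2 - b ^ 2) := hD ▸ hEig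
  have habs : |γ| ≤ c * (1 - lam) ^ 2 + q * (1 - lam) :=
    scalar_bound lam c q a b t N γ hlam0 hlam1 hc hsc hsc1 hclose ht2 ha2 hr2 hDpos hEig2
  refine ⟨habs, habs.trans ?_⟩
  have hqq : q * q = c := by rw [← hsc]; ring
  have hq1 : 0 ≤ q := by linarith
  have hq_le : q ≤ c := by
    have := mul_le_mul_of_nonneg_left hsc1 hq1
    linarith [this, hqq]
  have hsq1 : (1 - lam) ^ 2 ≤ 1 := by
    have h0 : 0 ≤ 1 - lam := by linarith
    have h1 : 1 - lam ≤ 1 := by linarith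
    calc (1 - lam) ^ 2 = (1 - lam) * (1 - lam) := sq (1 - lam) ▸ rfl
      _ ≤ 1 * 1 := mul_le_mul h1 h1 h0 zero_le_one
      _ = 1 := one_mul 1
  have h1 : c * (1 - lam) ^ 2 ≤ c := by
    have := mul_le_mul_of_nonneg_left hsq1 hc0
    linarith
  have h2 : q * (1 - lam) ≤ q := by
    have := mul_le_mul_of_nonneg_left (show 1 - lam ≤ 1 by linarith) hq1
    linarith
  linarith
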